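/- Every nonempty open subset X of the Urysohn space 𝕌 is DPT and CP1: for every x ∈ X there are a neighborhood U of x and K ≥ 1 such that for all y, z ∈ U and every d ∈ (0, d(y,z)) there exist n ∈ ℕ and points u₀,…,uₙ ∈ X with n ≤ K·d(y,z)/d, d(y,u₀) < d, d(uₙ,z) < d, and d(u_{i−1},u_i) = d for i = 1,…,n; and for every x ∈ X and r > 0 there is r* ∈ (0,r) such that for all x' ∈ X and r' > 0 with B(x',r') ⊆ B(x,r*), every connected component C of B(x,r) ∖ B(x',r') intersects B(x,r) ∖ B(x,r*). -/
import Mathlib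


open Metric Set

/-- The Urysohn space: a complete separable metric space which is universal for
separable metric spaces and finitely ultrahomogeneous. -/
def IsUrysohn (U : Type) [MetricSpace U] : Prop :=
  CompleteSpace U ∧ TopologicalSpace.SeparableSpace U ∧
  (∀ (Y : Type) [MetricSpace Y] [TopologicalSpace.SeparableSpace Y],
      ∃ f : Y → U, Isometry f) ∧
  (∀ (A : Set U) (f : U → U), A.Finite →
      (∀ u ∈ A, ∀ v ∈ A, dist (f u) (f v) = dist u v) →
      ∃ g : U ≃ᵢ U, ∀ u ∈ A, g u = f u)

/-- Auxiliary distance function from the extra point of `LP` to the line. -/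
noncomputable def stard (a b L t : ℝ) : ℝ := min (a + |t|) (b + |t - L|)

/-- The auxiliary space: a real line together with one extra point. -/
structure LP : Type where
  val : ℝ ⊕ Unit

/-- Distance on `LP` with parameters `a b L`. -/
noncomputable def lpdist (a b L : ℝ) : LP → LP → ℝ
  | ⟨.inl s⟩, ⟨.inl t⟩ => |s - t|
  | ⟨.inl t⟩, ⟨.inr _⟩ => stard a b L t
  | ⟨.inr _⟩, ⟨.inl t⟩ => stard a b L t
  | ⟨.inr _⟩, ⟨.inr _⟩ => 0

lemma stard_lipschitz (a b L s t : ℝ) : stard a b L s ≤ stard a b L t + |s - t| := by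
  have h1 : |s| ≤ |s - t| + |t| := by
    have := abs_sub_le s t 0; simpa using this
  have h2 : |s - L| ≤ |s - t| + |t - L| := by
    have h := abs_sub_le (s - L) (t - L) 0
    simp only [sub_zero] at h
    have e : (s - L) - (t - L) = s - t := by ring
    rw [e] at h; linarith
  rcases le_total (a + |t|) (b + |t - L|) with h | h
  · calc stard a b L s ≤ a + |s| := min_le_left _ _
      _ ≤ (a + |t|) + |s - t| := by linarith
      _ = stard a b L t + |s - t| := by rw [stard, min_eq_left h]
  · calc stard a b L s ≤ b + |s - L| := min_le_right _ _
      _ ≤ (b + |t - L|) + |s - t| := by linarith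
      _ = stard a b L t + |s - t| := by rw [stard, min_eq_right h]

lemma stard_big (a b L s t : ℝ) (ha : 0 ≤ a) (hb : 0 ≤ b) (hL0 : 0 ≤ L)
    (hab : L ≤ a + b) : |s - t| ≤ stard a b L s + stard a b L t := by
  have t1 : |s - t| ≤ |s| + |t| := abs_sub s t
  have t2 : |s - t| ≤ |s - L| + |t - L| := by
    have h := abs_sub (s - L) (t - L)
    have e : (s - L) - (t - L) = s - t := by ring
    rw [e] at h; linarith
  have t3 : |t| ≤ |t - L| + L := by
    have h := abs_sub_le t L 0
    simp only [sub_zero] at h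
    rw [abs_of_nonneg hL0] at h; linarith
  have t4 : |s| ≤ |s - L| + L := by
    have h := abs_sub_le s L 0
    simp only [sub_zero] at h
    rw [abs_of_nonneg hL0] at h; linarith
  rcases le_total (a + |s|) (b + |s - L|) with h | h <;>
    rcases le_total (a + |t|) (b + |t - L|) with h' | h' <;>
      simp only [stard, min_eq_left, min_eq_right, h, h'] <;> linarith

lemma stard_pos (a b L t : ℝ) (ha : 0 < a) (hb : 0 < b) : 0 < stard a b L t :=
  lt_min (by positivity) (by positivity)

/-- Metric space structure on `LP`. -/
noncomputable def lpMS (a b L : ℝ) (ha : 0 < a) (hb : 0 < b) (hL0 : 0 ≤ L)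
    (hab : L ≤ a + b) : MetricSpace LP where
  dist := lpdist a b L
  dist_self := by rintro ⟨t | u⟩ <;> simp [lpdist]
  dist_comm := by
    rintro ⟨s | u⟩ ⟨t | v⟩ <;> simp [lpdist, abs_sub_comm]
  dist_triangle := by
    rintro ⟨s | u⟩ ⟨t | v⟩ ⟨r | w⟩ <;> simp only [lpdist]
    · exact abs_sub_le s t r
    · linarith [stard_lipschitz a b L s t]
    · exact stard_big a b L s r ha.le hb.le hL0 hab
    · simp
    · rw [abs_sub_comm t r]; exact stard_lipschitz a b L r t
    · linarith [stard_pos a b L t ha hb]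
    · simp
    · simp
  eq_of_dist_eq_zero := by
    rintro ⟨s | u⟩ ⟨t | v⟩ h
    · simp only [lpdist] at h
      have : s = t := by
        have h' := abs_eq_zero.mp h
        linarith [sub_eq_zero.mp h']
      rw [this]
    · exact absurd h (stard_pos a b L s ha hb).ne'
    · exact absurd h (stard_pos a b L t ha hb).ne'
    · rfl

lemma lp_sep (a b L : ℝ) (ha : 0 < a) (hb : 0 < b) (hL0 : 0 ≤ L) (hab : L ≤ a + b) :
    letI := lpMS a b L ha hb hL0 hab
    TopologicalSpace.SeparableSpace LP := by
  letI := lpMS a b L ha hb hL0 hab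
  refine ⟨⟨(fun q : ℚ => (⟨.inl (q : ℝ)⟩ : LP)) '' Set.univ ∪ {(⟨.inr ()⟩ : LP)}, ?_, ?_⟩⟩
  · exact ((countable_univ_iff.2 inferInstance).image _).union (countable_singleton _)
  · rw [Metric.dense_iff]
    rintro ⟨t | u⟩ r hr
    · obtain ⟨q, hq⟩ := exists_rat_near t hr
      refine ⟨⟨.inl (q : ℝ)⟩, ?_, Or.inl ⟨q, trivial, rfl⟩⟩
      have : dist (⟨.inl (q : ℝ)⟩ : LP) (⟨.inl t⟩ : LP) = |(q : ℝ) - t| := rfl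
      rw [mem_ball, this, abs_sub_comm]
      exact hq
    · refine ⟨⟨.inr ()⟩, ?_, Or.inr rfl⟩
      have : dist (⟨.inr ()⟩ : LP) (⟨.inr u⟩ : LP) = 0 := rfl
      rw [mem_ball, this]
      exact hr
variable {U : Type} [MetricSpace U]


lemma IsUrysohn.exists_geodesic (hU : IsUrysohn U) (p q : U) (hpq : p ≠ q) :
    ∃ Q : ℝ → U, Isometry Q ∧ Q 0 = p ∧ Q (dist p q) = q := by
  classical
  obtain ⟨f, hf⟩ := hU.2.2.1 ℝ
  set L := dist p q with hLdef
  have hL : 0 < L := dist_pos.2 hpq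
  have hdf : dist (f 0) (f L) = L := by
    rw [hf.dist_eq, Real.dist_eq, abs_of_nonpos (by linarith)]; ring
  have hne : f 0 ≠ f L := by
    intro h; rw [h, dist_self] at hdf; exact hL.ne hdf
  set φ : U → U := fun u => if u = f 0 then p else if u = f L then q else u with hφ
  have e0 : φ (f 0) = p := if_pos rfl
  have eL : φ (f L) = q := by
    simp only [φ]; rw [if_neg hne.symm]; simp
  have hA : ({f 0, f L} : Set U).Finite := (Set.finite_singleton _).insert _
  have hpres : ∀ u ∈ ({f 0, f L} : Set U), ∀ v ∈ ({f 0, f L} : Set U),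
      dist (φ u) (φ v) = dist u v := by
    rintro u hu v hv
    rcases hu with rfl | hu
    · rcases hv with rfl | hv
      · rw [e0, dist_self, dist_self]
      · rw [mem_singleton_iff] at hv; subst hv
        rw [e0, eL, hdf]
    · rw [mem_singleton_iff] at hu; subst hu
      rcases hv with rfl | hv
      · rw [e0, eL, dist_comm, dist_comm (f L), hdf]
      · rw [mem_singleton_iff] at hv; subst hv
        rw [eL, dist_self, dist_self]
  obtain ⟨g, hg⟩ := hU.2.2.2 _ φ hA hpres
  refine ⟨fun t => g (f t), g.isometry.comp hf, ?_, ?_⟩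
  · exact (hg (f 0) (mem_insert _ _)).trans e0
  · exact (hg (f L) (mem_insert_of_mem _ rfl)).trans eL

lemma IsUrysohn.exists_at_dist (hU : IsUrysohn U) (p : U) (ρ : ℝ) (hρ : 0 < ρ) :
    ∃ m : U, dist p m = ρ := by
  obtain ⟨f, hf⟩ := hU.2.2.1 ℝ
  have h01 : f 0 ≠ f 1 := by
    intro h
    have := hf.dist_eq 0 1
    rw [h, dist_self] at this
    norm_num [Real.dist_eq] at this
  have : ∃ q0 : U, p ≠ q0 := by
    by_cases h : f 0 = p
    · exact ⟨f 1, fun hh => h01 (h.trans hh)⟩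
    · exact ⟨f 0, fun hh => h (hh.symm)⟩
  obtain ⟨q0, hq0⟩ := this
  obtain ⟨Q, hQ, hQ0, -⟩ := hU.exists_geodesic p q0 hq0
  refine ⟨Q ρ, ?_⟩
  rw [← hQ0, hQ.dist_eq, Real.dist_eq, abs_of_nonpos (by linarith)]; ring

lemma IsUrysohn.geodesic_with_control (hU : IsUrysohn U) (p q c : U)
    (hpq : p ≠ q) (hpc : p ≠ c) (hqc : q ≠ c) :
    ∃ Q : ℝ → U, Isometry Q ∧ Q 0 = p ∧ Q (dist p q) = q ∧
      ∀ t : ℝ, dist (Q t) c = stard (dist p c) (dist q c) (dist p q) t := by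
  classical
  set a := dist p c with hadef
  set b := dist q c with hbdef
  set L := dist p q with hLdef
  have ha : 0 < a := dist_pos.2 hpc
  have hb : 0 < b := dist_pos.2 hqc
  have hL : 0 < L := dist_pos.2 hpq
  have hab : L ≤ a + b := by
    calc L ≤ dist p c + dist c q := dist_triangle p c q
      _ = a + b := by rw [dist_comm c q]
  letI := lpMS a b L ha hb hL.le hab
  haveI := lp_sep a b L ha hb hL.le hab
  obtain ⟨F, hF⟩ := hU.2.2.1 LP
  set A1 := F ⟨.inl 0⟩ with hA1
  set A2 := F ⟨.inl L⟩ with hA2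
  set A3 := F ⟨.inr ()⟩ with hA3
  have h0L : |(0:ℝ) - L| = L := by rw [abs_of_nonpos (by linarith)]; ring
  have d12 : dist A1 A2 = L := by
    rw [hA1, hA2, hF.dist_eq]
    have e : dist (⟨.inl 0⟩ : LP) (⟨.inl L⟩ : LP) = |(0:ℝ) - L| := rfl
    rw [e, h0L]
  have d13 : dist A1 A3 = a := by
    rw [hA1, hA3, hF.dist_eq]
    have e : dist (⟨.inl 0⟩ : LP) (⟨.inr ()⟩ : LP) = stard a b L 0 := rfl
    rw [e, stard, abs_zero, add_zero, zero_sub, abs_neg, abs_of_nonneg hL.le]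
    refine min_eq_left ?_
    calc a ≤ dist p q + dist q c := dist_triangle p q c
      _ = b + L := by rw [add_comm]
  have d23 : dist A2 A3 = b := by
    rw [hA2, hA3, hF.dist_eq]
    have e : dist (⟨.inl L⟩ : LP) (⟨.inr ()⟩ : LP) = stard a b L L := rfl
    rw [e, stard, sub_self, abs_zero, add_zero, abs_of_nonneg hL.le]
    refine min_eq_right ?_
    calc b ≤ dist q p + dist p c := dist_triangle q p c
      _ = a + L := by rw [dist_comm q p, add_comm]
  have h21 : A2 ≠ A1 := by
    intro h; rw [h, dist_self] at d12; exact hL.ne d12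
  have h31 : A3 ≠ A1 := by
    intro h; rw [h, dist_self] at d13; exact ha.ne d13
  have h32 : A3 ≠ A2 := by
    intro h; rw [h, dist_self] at d23; exact hb.ne d23
  set φ : U → U := fun u =>
    if u = A1 then p else if u = A2 then q else if u = A3 then c else u with hφ
  have e1 : φ A1 = p := if_pos rfl
  have e2 : φ A2 = q := by
    simp only [φ]; rw [if_neg h21]; simp
  have e3 : φ A3 = c := by
    simp only [φ]; rw [if_neg h31, if_neg h32]; simp
  have hAfin : ({A1, A2, A3} : Set U).Finite :=
    (((Set.finite_singleton _).insert _).insert _)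
  have hpres : ∀ u ∈ ({A1, A2, A3} : Set U), ∀ v ∈ ({A1, A2, A3} : Set U),
      dist (φ u) (φ v) = dist u v := by
    intro u hu v hv
    simp only [mem_insert_iff, mem_singleton_iff] at hu hv
    rcases hu with rfl | rfl | rfl <;> rcases hv with rfl | rfl | rfl <;>
      simp only [e1, e2, e3] <;>
      first
        | rw [dist_self, dist_self]
        | (rw [d12] <;> exact hLdef.symm)
        | (rw [d13] <;> exact hadef.symm)
        | (rw [d23] <;> exact hbdef.symm)
        | (rw [dist_comm q p, dist_comm A2 A1, d12] <;> exact hLdef.symm)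
        | (rw [dist_comm c p, dist_comm A3 A1, d13] <;> exact hadef.symm)
        | (rw [dist_comm c q, dist_comm A3 A2, d23] <;> exact hbdef.symm)
  obtain ⟨g, hg⟩ := hU.2.2.2 _ φ hAfin hpres
  have hg1 : g A1 = p := (hg A1 (by simp)).trans e1
  have hg2 : g A2 = q := (hg A2 (by simp)).trans e2
  have hg3 : g A3 = c := (hg A3 (by simp)).trans e3
  have hline : Isometry (fun t : ℝ => F ⟨.inl t⟩) := by
    refine Isometry.of_dist_eq fun s t => ?_
    rw [hF.dist_eq]
    have e : dist (⟨.inl s⟩ : LP) (⟨.inl t⟩ : LP) = |s - t| := rfl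
    rw [e, Real.dist_eq]
  refine ⟨fun t => g (F ⟨.inl t⟩), g.isometry.comp hline, hg1, hg2, fun t => ?_⟩
  have : dist (g (F ⟨.inl t⟩)) c = dist (g (F ⟨.inl t⟩)) (g A3) := by rw [hg3]
  rw [this, g.isometry.dist_eq, hA3, hF.dist_eq]
  rfl

/-- Every nonempty open subset `X` of the Urysohn space (with the induced
metric) is DPT (discrete path property) and CP1 (connectivity property 1). -/
theorem open_subset_DPT_and_CP1 (U : Type) [MetricSpace U] (hU : IsUrysohn U)
    (X : Set U) (hX : IsOpen X) (hXne : X.Nonempty) :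
    (∀ x : X, ∃ V : Set X, V ∈ nhds x ∧ ∃ K : ℝ, 1 ≤ K ∧
      ∀ y ∈ V, ∀ z ∈ V, ∀ d : ℝ, 0 < d → d < dist y z →
        ∃ n : ℕ, ∃ u : ℕ → X,
          (n : ℝ) ≤ K * dist y z / d ∧
          dist y (u 0) < d ∧ dist (u n) z < d ∧
          ∀ i : ℕ, 1 ≤ i → i ≤ n → dist (u (i - 1)) (u i) = d) ∧
    (∀ x : X, ∀ r : ℝ, 0 < r → ∃ rs : ℝ, 0 < rs ∧ rs < r ∧
      ∀ x' : X, ∀ r' : ℝ, 0 < r' → ball x' r' ⊆ ball x rs →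
        ∀ z ∈ ball x r \ ball x' r',
          (connectedComponentIn (ball x r \ ball x' r') z ∩
            (ball x r \ ball x rs)).Nonempty) := by
  constructor
  · -- DPT
    intro x
    obtain ⟨ε, hε, hball⟩ := Metric.isOpen_iff.1 hX x.1 x.2
    refine ⟨ball x (ε/4), ball_mem_nhds _ (by linarith), 1, le_refl 1, ?_⟩
    intro y hy z hz d hd hdL
    have hyx : dist y.1 x.1 < ε/4 := mem_ball.1 hy
    have hzx : dist z.1 x.1 < ε/4 := mem_ball.1 hz
    have hdL' : d < dist y.1 z.1 := hdL
    have hL0 : 0 < dist y.1 z.1 := lt_trans hd hdL'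
    have hyz : y.1 ≠ z.1 := dist_pos.1 hL0
    obtain ⟨Q, hQ, hQ0, hQL⟩ := hU.exists_geodesic y.1 z.1 hyz
    set L := dist y.1 z.1 with hLdef
    have hLlt : L < ε/2 := by
      have h1 := dist_triangle y.1 x.1 z.1
      have h2 : dist x.1 z.1 = dist z.1 x.1 := dist_comm _ _
      linarith
    have hQdist : ∀ s : ℝ, 0 ≤ s → dist (Q s) y.1 = s := by
      intro s h0
      rw [← hQ0, hQ.dist_eq, Real.dist_eq, abs_of_nonneg (by linarith : (0:ℝ) ≤ s - 0)]
      ring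
    have hmem : ∀ s : ℝ, 0 ≤ s → s ≤ L → Q s ∈ X := by
      intro s h0 hsL
      apply hball
      rw [mem_ball]
      calc dist (Q s) x.1 ≤ dist (Q s) y.1 + dist y.1 x.1 := dist_triangle _ _ _
        _ = s + dist y.1 x.1 := by rw [hQdist s h0]
        _ < ε := by linarith
    set n := Nat.floor ((L - d/2)/d) with hn
    have hdiv0 : (0:ℝ) ≤ (L - d/2)/d := div_nonneg (by linarith) hd.le
    have hnle : (n:ℝ) ≤ (L - d/2)/d := Nat.floor_le hdiv0
    have hngt : (L - d/2)/d < n + 1 := Nat.lt_floor_add_one _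
    have hnd : (n:ℝ) * d ≤ L - d/2 := (le_div_iff₀ hd).1 hnle
    have hnd' : L - d/2 < ((n:ℝ) + 1) * d := by
      have := (div_lt_iff₀ hd).1 hngt
      linarith
    have htmem : ∀ i : ℕ, i ≤ n → d/2 + (i:ℝ)*d ≤ L := by
      intro i hi
      have h1 : (i:ℝ) ≤ (n:ℝ) := Nat.cast_le.2 hi
      have h2 : (i:ℝ)*d ≤ (n:ℝ)*d := mul_le_mul_of_nonneg_right h1 hd.le
      linarith
    have ht0 : ∀ i : ℕ, (0:ℝ) ≤ d/2 + (i:ℝ)*d := by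
      intro i; positivity
    set u : ℕ → X := fun i =>
      ⟨Q (d/2 + ((min i n : ℕ):ℝ)*d),
        hmem _ (ht0 _) (htmem _ (min_le_right i n))⟩ with hu
    have huval : ∀ i : ℕ, i ≤ n → (u i).1 = Q (d/2 + (i:ℝ)*d) := by
      intro i hi
      simp only [hu, min_eq_left hi]
    refine ⟨n, u, ?_, ?_, ?_, ?_⟩
    · rw [one_mul]
      have : dist y z = L := rfl
      rw [this, le_div_iff₀ hd]
      linarith
    · have h0 : (u 0).1 = Q (d/2 + ((0:ℕ):ℝ)*d) := huval 0 (Nat.zero_le n)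
      rw [Subtype.dist_eq, h0, dist_comm, hQdist _ (ht0 0)]
      simp only [Nat.cast_zero, zero_mul, add_zero]
      linarith
    · have hn' : (u n).1 = Q (d/2 + (n:ℝ)*d) := huval n (le_refl n)
      have : dist (u n) z = dist (Q (d/2 + (n:ℝ)*d)) (Q L) := by
        rw [Subtype.dist_eq, hn', hQL]
      rw [this, hQ.dist_eq, Real.dist_eq, abs_of_nonpos (by linarith [htmem n (le_refl n)])]
      linarith
    · intro i h1i hin
      have hi1 : i - 1 ≤ n := le_trans (Nat.sub_le i 1) hin
      have e1 : (u (i-1)).1 = Q (d/2 + ((i-1:ℕ):ℝ)*d) := huval _ hi1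
      have e2 : (u i).1 = Q (d/2 + (i:ℝ)*d) := huval _ hin
      have ecast : ((i-1:ℕ):ℝ) = (i:ℝ) - 1 := by
        rw [Nat.cast_sub h1i, Nat.cast_one]
      rw [Subtype.dist_eq, e1, e2, hQ.dist_eq, Real.dist_eq, ecast]
      have : d/2 + ((i:ℝ) - 1)*d - (d/2 + (i:ℝ)*d) = -d := by ring
      rw [this, abs_neg, abs_of_nonneg hd.le]
  · -- CP1
    intro x r hr
    obtain ⟨ε, hε, hball⟩ := Metric.isOpen_iff.1 hX x.1 x.2
    set c := min ε r with hc
    have hc0 : 0 < c := lt_min hε hr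
    have hcε : c ≤ ε := min_le_left _ _
    have hcr : c ≤ r := min_le_right _ _
    refine ⟨c/8, by positivity, by linarith, ?_⟩
    intro x' r' hr' hsub z hz
    by_cases hzrs : z ∈ ball x (c/8)
    swap
    · exact ⟨z, mem_connectedComponentIn hz, hz.1, hzrs⟩
    have hzx : dist z.1 x.1 < c/8 := mem_ball.1 hzrs
    have hx'x : dist x'.1 x.1 < c/8 := mem_ball.1 (hsub (mem_ball_self hr'))
    have hzx' : r' ≤ dist z.1 x'.1 := not_lt.1 (fun h => hz.2 (mem_ball.2 h))
    -- Claim: r' + dist x' x ≤ c/8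
    have claimR : r' + dist x'.1 x.1 ≤ c/8 := by
      by_contra hcon
      push_neg at hcon
      have hm : ∃ m : U, dist x.1 m = c/8 ∧ dist x'.1 m < r' := by
        by_cases hxx : x'.1 = x.1
        · obtain ⟨m, hm⟩ := hU.exists_at_dist x.1 (c/8) (by positivity)
          refine ⟨m, hm, ?_⟩
          rw [hxx, hm]
          rw [hxx, dist_self] at hcon
          linarith
        · obtain ⟨Q', hQ', hQ'0, hQ'L⟩ :=
            hU.exists_geodesic x.1 x'.1 (fun h => hxx h.symm)
          have hdxx : dist x.1 x'.1 < c/8 := by rw [dist_comm]; exact hx'x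
          refine ⟨Q' (c/8), ?_, ?_⟩
          · rw [← hQ'0, hQ'.dist_eq, Real.dist_eq,
              abs_of_nonpos (by linarith : (0:ℝ) - c/8 ≤ 0)]
            ring
          · rw [← hQ'L, hQ'.dist_eq, Real.dist_eq,
              abs_of_nonpos (by linarith : dist x.1 x'.1 - c/8 ≤ 0)]
            rw [dist_comm x.1 x'.1] at *
            linarith
      obtain ⟨m, hm1, hm2⟩ := hm
      have hmX : m ∈ X := by
        apply hball
        rw [mem_ball, dist_comm, hm1]
        linarith
      have hmball : (⟨m, hmX⟩ : X) ∈ ball x' r' := by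
        rw [mem_ball]
        show dist m x'.1 < r'
        rw [dist_comm]; exact hm2
      have := mem_ball.1 (hsub hmball)
      have : dist m x.1 < c/8 := this
      rw [dist_comm] at hm1
      linarith
    -- the far point w
    obtain ⟨w, hw⟩ := hU.exists_at_dist x.1 (c/2) (by positivity)
    have hwx : dist w x.1 = c/2 := by rw [dist_comm]; exact hw
    have hwX : w ∈ X := by
      apply hball
      rw [mem_ball, hwx]
      linarith
    set W : X := ⟨w, hwX⟩ with hW
    have hWr : W ∈ ball x r := by
      rw [mem_ball]
      show dist w x.1 < r
      rw [hwx]; linarith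
    have hWrs : W ∉ ball x (c/8) := by
      rw [mem_ball]
      show ¬ dist w x.1 < c/8
      rw [hwx]; push_neg; linarith
    -- distinctness
    have hzw : z.1 ≠ w := by
      intro h
      rw [← h] at hwx
      have : dist z.1 x.1 = dist z.1 x.1 := rfl
      linarith [hzx, hwx.symm.trans_lt (lt_of_le_of_lt (le_refl _) (by linarith : dist z.1 x.1 < c/8))]
    have hzx'ne : z.1 ≠ x'.1 := by
      intro h
      rw [h, dist_self] at hzx'
      linarith
    have hwx' : w ≠ x'.1 := by
      intro h
      rw [← h] at hx'x
      linarith [hwx]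
    obtain ⟨Q, hQiso, hQ0, hQL, hQctl⟩ :=
      hU.geodesic_with_control z.1 w x'.1 hzw hzx'ne hwx'
    set L := dist z.1 w with hLdef
    have hL0 : 0 ≤ L := dist_nonneg
    have hLlt : L < c/8 + c/2 := by
      calc L ≤ dist z.1 x.1 + dist x.1 w := dist_triangle _ _ _
        _ < c/8 + c/2 := by rw [hw]; linarith
    have hQz : ∀ s : ℝ, 0 ≤ s → dist (Q s) z.1 = s := by
      intro s h0
      rw [← hQ0, hQiso.dist_eq, Real.dist_eq,
        abs_of_nonneg (by linarith : (0:ℝ) ≤ s - 0)]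
      ring
    have hQdistx : ∀ s : ℝ, 0 ≤ s → s ≤ L → dist (Q s) x.1 < 3*c/4 := by
      intro s h0 hsL
      calc dist (Q s) x.1 ≤ dist (Q s) z.1 + dist z.1 x.1 := dist_triangle _ _ _
        _ = s + dist z.1 x.1 := by rw [hQz s h0]
        _ < 3*c/4 := by linarith
    have hmemX : ∀ s : ℝ, Q (max 0 (min s L)) ∈ X := by
      intro s
      apply hball
      rw [mem_ball]
      have h0 : 0 ≤ max 0 (min s L) := le_max_left _ _
      have hLe : max 0 (min s L) ≤ L := max_le hL0 (min_le_right s L)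
      calc dist (Q (max 0 (min s L))) x.1 < 3*c/4 := hQdistx _ h0 hLe
        _ < ε := by linarith
    set q' : ℝ → X := fun s => ⟨Q (max 0 (min s L)), hmemX s⟩ with hq'
    have hq'cont : Continuous q' := by
      apply Continuous.subtype_mk
      exact hQiso.continuous.comp (continuous_const.max (continuous_id.min continuous_const))
    have hq'in : ∀ s ∈ Icc (0:ℝ) L, (q' s).1 = Q s := by
      intro s hs
      simp only [hq', min_eq_left hs.2, max_eq_right hs.1]
    set C : Set X := q' '' (Icc 0 L) with hC
    have hCconn : IsConnected C := (isConnected_Icc hL0).image q' hq'cont.continuousOn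
    have hzC : z ∈ C :=
      ⟨0, ⟨le_refl 0, hL0⟩, Subtype.ext (by rw [hq'in 0 ⟨le_refl 0, hL0⟩, hQ0])⟩
    have hWC : W ∈ C :=
      ⟨L, ⟨hL0, le_refl L⟩, Subtype.ext (by rw [hq'in L ⟨hL0, le_refl L⟩, hQL])⟩
    have hCsub : C ⊆ ball x r \ ball x' r' := by
      rintro - ⟨s, hs, rfl⟩
      constructor
      · rw [mem_ball]
        have : dist (q' s).1 x.1 < 3*c/4 := by
          rw [hq'in s hs]; exact hQdistx s hs.1 hs.2
        calc dist (q' s) x = dist (q' s).1 x.1 := rfl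
          _ < 3*c/4 := this
          _ < r := by linarith
      · rw [mem_ball]
        push_neg
        have hb' : c/2 - dist x'.1 x.1 ≤ dist w x'.1 := by
          have := dist_triangle x.1 x'.1 w
          rw [hw] at this
          rw [dist_comm x.1 x'.1, dist_comm x'.1 w] at this
          linarith
        have hr'b : r' ≤ dist w x'.1 := by linarith
        have hQs : dist (Q s) x'.1 =
            min (dist z.1 x'.1 + |s|) (dist w x'.1 + |s - L|) := by
          rw [hQctl s]; rfl
        calc r' ≤ min (dist z.1 x'.1 + |s|) (dist w x'.1 + |s - L|) := by
              refine le_min ?_ ?_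
              · have := abs_nonneg s; linarith
              · have := abs_nonneg (s - L); linarith
          _ = dist (Q s) x'.1 := hQs.symm
          _ = dist (q' s) x' := by rw [Subtype.dist_eq, hq'in s hs]
    have hsubC := hCconn.isPreconnected.subset_connectedComponentIn hzC hCsub
    exact ⟨W, hsubC hWC, hWr, hWrs⟩
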